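/- arXiv:2502.06383 — 5 statements merged into one kernel-verified Lean document; each statement's English description precedes it below -/
import Mathlib

section
/- For every λ ∈ K and all x, y ∈ g, the Lie bracket satisfies ⁅φ_λ(x), φ_λ(y)⁆ = λ · φ_λ(⁅x, y⁆). -/
/-- Lemma 4.2(1): for every `λ ∈ K` and all `x, y ∈ g`,
`⁅φ_λ(x), φ_λ(y)⁆ = λ • φ_λ(⁅x, y⁆)`. -/
theorem stmt_0 (K : Type*) [Field K] [CharZero K]
    (g : Type*) [LieRing g] [LieAlgebra K g]
    (uPlus ell uMinus : Submodule K g)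
    (hdec : ∀ x : g, ∃! t : uPlus × ell × uMinus, x = ↑t.1 + ↑t.2.1 + ↑t.2.2)
    (hPP : ∀ x ∈ uPlus, ∀ y ∈ uPlus, ⁅x, y⁆ = (0 : g))
    (hMM : ∀ x ∈ uMinus, ∀ y ∈ uMinus, ⁅x, y⁆ = (0 : g))
    (hll : ∀ x ∈ ell, ∀ y ∈ ell, ⁅x, y⁆ ∈ ell)
    (hlP : ∀ x ∈ ell, ∀ y ∈ uPlus, ⁅x, y⁆ ∈ uPlus)
    (hlM : ∀ x ∈ ell, ∀ y ∈ uMinus, ⁅x, y⁆ ∈ uMinus)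
    (hPM : ∀ x ∈ uPlus, ∀ y ∈ uMinus, ⁅x, y⁆ ∈ ell)
    (φ : K → g →ₗ[K] g)
    (hφ : ∀ (lam : K), ∀ a ∈ uPlus, ∀ b ∈ ell, ∀ c ∈ uMinus,
      φ lam (a + b + c) = a + lam • b + lam ^ 2 • c) :
    ∀ (lam : K) (x y : g), ⁅φ lam x, φ lam y⁆ = lam • φ lam ⁅x, y⁆ := by
  intro lam x y
  obtain ⟨⟨a, b, c⟩, hx, -⟩ := hdec x
  obtain ⟨⟨a', b', c'⟩, hy, -⟩ := hdec y
  simp only at hx hy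
  subst hx hy
  have hP : (⁅(a : g), (b' : g)⁆ + ⁅(b : g), (a' : g)⁆) ∈ uPlus := by
    refine Submodule.add_mem _ ?_ (hlP b b.2 a' a'.2)
    rw [← lie_skew]
    exact uPlus.neg_mem (hlP b' b'.2 a a.2)
  have hL : (⁅(b : g), (b' : g)⁆ + ⁅(a : g), (c' : g)⁆ + ⁅(c : g), (a' : g)⁆) ∈ ell := by
    refine Submodule.add_mem _ (Submodule.add_mem _ (hll b b.2 b' b'.2)
      (hPM a a.2 c' c'.2)) ?_
    rw [← lie_skew]
    exact ell.neg_mem (hPM a' a'.2 c c.2)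
  have hM : (⁅(b : g), (c' : g)⁆ + ⁅(c : g), (b' : g)⁆) ∈ uMinus := by
    refine Submodule.add_mem _ (hlM b b.2 c' c'.2) ?_
    rw [← lie_skew]
    exact uMinus.neg_mem (hlM b' b'.2 c c.2)
  have hxy : ⁅(a : g) + b + c, (a' : g) + b' + c'⁆ =
      (⁅(a : g), (b' : g)⁆ + ⁅(b : g), (a' : g)⁆) +
      (⁅(b : g), (b' : g)⁆ + ⁅(a : g), (c' : g)⁆ + ⁅(c : g), (a' : g)⁆) +
      (⁅(b : g), (c' : g)⁆ + ⁅(c : g), (b' : g)⁆) := by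
    simp only [lie_add, add_lie, hPP a a.2 a' a'.2, hMM c c.2 c' c'.2]
    abel
  rw [hφ lam a a.2 b b.2 c c.2, hφ lam a' a'.2 b' b'.2 c' c'.2, hxy,
    hφ lam _ hP _ hL _ hM]
  simp only [lie_add, add_lie, lie_smul, smul_lie, hPP a a.2 a' a'.2,
    hMM c c.2 c' c'.2, smul_add, smul_smul, smul_zero]
  module
end

section
/- For every nonzero λ ∈ K and all v, x, y ∈ g, the Killing form satisfies κ(φ_λ(v), ⁅φ_λ(x), φ_λ(y)⁆) = λ³ · κ(v, ⁅x, y⁆). -/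
/-- Lemma 4.2(2): for every nonzero `λ ∈ K` and all `v, x, y ∈ g`,
`κ(φ_λ(v), ⁅φ_λ(x), φ_λ(y)⁆) = λ³ · κ(v, ⁅x, y⁆)` where `κ` is the Killing form. -/
theorem stmt_2 (K : Type*) [Field K] [CharZero K]
    (g : Type*) [LieRing g] [LieAlgebra K g] [Module.Finite K g]
    (uPlus ell uMinus : Submodule K g)
    (hdec : ∀ x : g, ∃! t : uPlus × ell × uMinus, x = ↑t.1 + ↑t.2.1 + ↑t.2.2)
    (hPP : ∀ x ∈ uPlus, ∀ y ∈ uPlus, ⁅x, y⁆ = (0 : g))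
    (hMM : ∀ x ∈ uMinus, ∀ y ∈ uMinus, ⁅x, y⁆ = (0 : g))
    (hll : ∀ x ∈ ell, ∀ y ∈ ell, ⁅x, y⁆ ∈ ell)
    (hlP : ∀ x ∈ ell, ∀ y ∈ uPlus, ⁅x, y⁆ ∈ uPlus)
    (hlM : ∀ x ∈ ell, ∀ y ∈ uMinus, ⁅x, y⁆ ∈ uMinus)
    (hPM : ∀ x ∈ uPlus, ∀ y ∈ uMinus, ⁅x, y⁆ ∈ ell)
    (φ : K → g →ₗ[K] g)
    (hφ : ∀ (lam : K), ∀ a ∈ uPlus, ∀ b ∈ ell, ∀ c ∈ uMinus,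
      φ lam (a + b + c) = a + lam • b + lam ^ 2 • c) :
    ∀ lam : K, lam ≠ 0 → ∀ v x y : g,
      killingForm K g (φ lam v) ⁅φ lam x, φ lam y⁆ = lam ^ 3 * killingForm K g v ⁅x, y⁆ := by
  -- componentwise descriptions of φ
  have hφP : ∀ (μ : K), ∀ a ∈ uPlus, φ μ a = a := by
    intro μ a ha
    have := hφ μ a ha 0 (zero_mem _) 0 (zero_mem _)
    simpa using this
  have hφL : ∀ (μ : K), ∀ b ∈ ell, φ μ b = μ • b := by
    intro μ b hb
    have := hφ μ 0 (zero_mem _) b hb 0 (zero_mem _)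
    simpa using this
  have hφM : ∀ (μ : K), ∀ c ∈ uMinus, φ μ c = μ ^ 2 • c := by
    intro μ c hc
    have := hφ μ 0 (zero_mem _) 0 (zero_mem _) c hc
    simpa using this
  intro lam hlam v x y
  -- key multiplicativity fact
  have hkey : ∀ p q : g, lam • φ lam ⁅p, q⁆ = ⁅φ lam p, φ lam q⁆ := by
    intro p q
    obtain ⟨⟨⟨a, ha⟩, ⟨b, hb⟩, ⟨c, hc⟩⟩, hp, -⟩ := hdec p
    obtain ⟨⟨⟨a', ha'⟩, ⟨b', hb'⟩, ⟨c', hc'⟩⟩, hq, -⟩ := hdec q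
    simp only at hp hq
    subst hp hq
    have mab' : ⁅a, b'⁆ ∈ uPlus := by
      rw [← lie_skew]; exact neg_mem (hlP b' hb' a ha)
    have mba' : ⁅b, a'⁆ ∈ uPlus := hlP b hb a' ha'
    have mac' : ⁅a, c'⁆ ∈ ell := hPM a ha c' hc'
    have mbb' : ⁅b, b'⁆ ∈ ell := hll b hb b' hb'
    have mca' : ⁅c, a'⁆ ∈ ell := by
      rw [← lie_skew]; exact neg_mem (hPM a' ha' c hc)
    have mbc' : ⁅b, c'⁆ ∈ uMinus := hlM b hb c' hc'
    have mcb' : ⁅c, b'⁆ ∈ uMinus := by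
      rw [← lie_skew]; exact neg_mem (hlM b' hb' c hc)
    rw [hφ lam a ha b hb c hc, hφ lam a' ha' b' hb' c' hc']
    simp only [lie_add, add_lie, smul_lie, lie_smul, hPP a ha a' ha', hMM c hc c' hc',
      smul_zero, map_add, map_smul, map_zero,
      hφP lam _ mab', hφP lam _ mba', hφL lam _ mac', hφL lam _ mbb', hφL lam _ mca',
      hφM lam _ mbc', hφM lam _ mcb']
    match_scalars <;> ring
  -- build the Lie algebra automorphism  θ = lam⁻¹ • φ lam
  have hcomp : ∀ (μ ν : K) (z : g), φ μ (φ ν z) = φ (μ * ν) z := by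
    intro μ ν z
    obtain ⟨⟨⟨a, ha⟩, ⟨b, hb⟩, ⟨c, hc⟩⟩, hz, -⟩ := hdec z
    simp only at hz
    subst hz
    rw [hφ ν a ha b hb c hc, hφ μ a ha (ν • b) (ell.smul_mem _ hb)
      (ν ^ 2 • c) (uMinus.smul_mem _ hc), hφ (μ * ν) a ha b hb c hc]
    match_scalars <;> ring
  have hone : ∀ z : g, φ 1 z = z := by
    intro z
    obtain ⟨⟨⟨a, ha⟩, ⟨b, hb⟩, ⟨c, hc⟩⟩, hz, -⟩ := hdec z
    simp only at hz
    subst hz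
    rw [hφ 1 a ha b hb c hc]
    simp
  have hinv : ∀ z : g, (lam⁻¹ • φ lam) ((lam • φ lam⁻¹) z) = z := by
    intro z
    simp [hcomp, smul_smul, mul_inv_cancel₀ hlam, inv_mul_cancel₀ hlam, hone]
  have hinv' : ∀ z : g, (lam • φ lam⁻¹) ((lam⁻¹ • φ lam) z) = z := by
    intro z
    simp [hcomp, smul_smul, mul_inv_cancel₀ hlam, inv_mul_cancel₀ hlam, hone]
  let E : g ≃ₗ[K] g := LinearEquiv.ofLinear (lam⁻¹ • φ lam) (lam • φ lam⁻¹)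
    (LinearMap.ext hinv) (LinearMap.ext hinv')
  let e : g ≃ₗ⁅K⁆ g :=
    { E with
      map_lie' := by
        intro p q
        show (lam⁻¹ • φ lam) ⁅p, q⁆ = ⁅(lam⁻¹ • φ lam) p, (lam⁻¹ • φ lam) q⁆
        simp only [LinearMap.smul_apply, smul_lie, lie_smul, ← hkey p q, smul_smul]
        match_scalars <;> field_simp }
  have he : ∀ z : g, φ lam z = lam • e z := by
    intro z
    show φ lam z = lam • (lam⁻¹ • φ lam z)
    rw [smul_smul, mul_inv_cancel₀ hlam, one_smul]
  have hml : ⁅e x, e y⁆ = e ⁅x, y⁆ := ((e : g →ₗ⁅K⁆ g).map_lie x y).symm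
  rw [he v, he x, he y, lie_smul, smul_lie, hml]
  simp only [map_smul, LinearMap.smul_apply, smul_eq_mul,
    LieAlgebra.killingForm_of_equiv_apply]
  ring
end

section
/- For every nonzero λ ∈ K and every x ∈ g that is ad-nilpotent (i.e. the endomorphism ad(x) : g → g, z ↦ ⁅x, z⁆, is nilpotent), the element φ_λ(x) is also ad-nilpotent. -/
/-- Lemma 4.2(3): for every nonzero `λ ∈ K`, the map `φ_λ` preserves ad-nilpotent
elements of `g`. -/
theorem stmt_4 (K : Type*) [Field K] [CharZero K]
    (g : Type*) [LieRing g] [LieAlgebra K g]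
    (uPlus ell uMinus : Submodule K g)
    (hdec : ∀ x : g, ∃! t : uPlus × ell × uMinus, x = ↑t.1 + ↑t.2.1 + ↑t.2.2)
    (hPP : ∀ x ∈ uPlus, ∀ y ∈ uPlus, ⁅x, y⁆ = (0 : g))
    (hMM : ∀ x ∈ uMinus, ∀ y ∈ uMinus, ⁅x, y⁆ = (0 : g))
    (hll : ∀ x ∈ ell, ∀ y ∈ ell, ⁅x, y⁆ ∈ ell)
    (hlP : ∀ x ∈ ell, ∀ y ∈ uPlus, ⁅x, y⁆ ∈ uPlus)
    (hlM : ∀ x ∈ ell, ∀ y ∈ uMinus, ⁅x, y⁆ ∈ uMinus)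
    (hPM : ∀ x ∈ uPlus, ∀ y ∈ uMinus, ⁅x, y⁆ ∈ ell)
    (φ : K → g →ₗ[K] g)
    (hφ : ∀ (lam : K), ∀ a ∈ uPlus, ∀ b ∈ ell, ∀ c ∈ uMinus,
      φ lam (a + b + c) = a + lam • b + lam ^ 2 • c) :
    ∀ lam : K, lam ≠ 0 → ∀ x : g,
      IsNilpotent (LieAlgebra.ad K g x) → IsNilpotent (LieAlgebra.ad K g (φ lam x)) := by
  -- composition law: φ lam ∘ φ mu = φ (lam * mu)
  have hcomp : ∀ lam mu : K, ∀ x : g, φ lam (φ mu x) = φ (lam * mu) x := by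
    intro lam mu x
    obtain ⟨⟨⟨a, ha⟩, ⟨b, hb⟩, ⟨c, hc⟩⟩, hx, -⟩ := hdec x
    simp only at hx
    rw [hx, hφ mu a ha b hb c hc, hφ lam a ha (mu • b) (ell.smul_mem mu hb)
      (mu ^ 2 • c) (uMinus.smul_mem _ hc), hφ (lam * mu) a ha b hb c hc,
      smul_smul, smul_smul, mul_pow]
  -- φ 1 = id
  have hone : ∀ x : g, φ 1 x = x := by
    intro x
    obtain ⟨⟨⟨a, ha⟩, ⟨b, hb⟩, ⟨c, hc⟩⟩, hx, -⟩ := hdec x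
    simp only at hx
    rw [hx, hφ 1 a ha b hb c hc, one_smul, one_pow, one_smul]
  -- key identity: ⁅φ lam u, φ lam v⁆ = lam • φ lam ⁅u, v⁆
  have key : ∀ lam : K, ∀ u v : g, ⁅φ lam u, φ lam v⁆ = lam • φ lam ⁅u, v⁆ := by
    intro lam u v
    obtain ⟨⟨⟨a, ha⟩, ⟨b, hb⟩, ⟨c, hc⟩⟩, hu, -⟩ := hdec u
    obtain ⟨⟨⟨a', ha'⟩, ⟨b', hb'⟩, ⟨c', hc'⟩⟩, hv, -⟩ := hdec v
    simp only at hu hv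
    subst hu hv
    have hA : ⁅a, b'⁆ + ⁅b, a'⁆ ∈ uPlus := by
      refine uPlus.add_mem ?_ (hlP b hb a' ha')
      rw [← lie_skew a b']
      exact uPlus.neg_mem (hlP b' hb' a ha)
    have hB : ⁅a, c'⁆ + ⁅b, b'⁆ + ⁅c, a'⁆ ∈ ell := by
      refine ell.add_mem (ell.add_mem (hPM a ha c' hc') (hll b hb b' hb')) ?_
      rw [← lie_skew c a']
      exact ell.neg_mem (hPM a' ha' c hc)
    have hC : ⁅b, c'⁆ + ⁅c, b'⁆ ∈ uMinus := by
      refine uMinus.add_mem (hlM b hb c' hc') ?_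
      rw [← lie_skew c b']
      exact uMinus.neg_mem (hlM b' hb' c hc)
    have hbr : ⁅a + b + c, a' + b' + c'⁆ =
        (⁅a, b'⁆ + ⁅b, a'⁆) + (⁅a, c'⁆ + ⁅b, b'⁆ + ⁅c, a'⁆) + (⁅b, c'⁆ + ⁅c, b'⁆) := by
      simp only [add_lie, lie_add, hPP a ha a' ha', hMM c hc c' hc']
      abel
    rw [hφ lam a ha b hb c hc, hφ lam a' ha' b' hb' c' hc', hbr,
      hφ lam _ hA _ hB _ hC]
    simp only [add_lie, lie_add, smul_lie, lie_smul, hPP a ha a' ha', hMM c hc c' hc',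
      smul_add, smul_smul, smul_zero]
    module
  intro lam hlam x hx
  obtain ⟨n, hn⟩ := hx
  -- iterated identity
  have hiter : ∀ m : ℕ, ∀ z : g,
      ((LieAlgebra.ad K g (φ lam x)) ^ m) (φ lam z) =
        lam ^ m • φ lam (((LieAlgebra.ad K g x) ^ m) z) := by
    intro m
    induction m with
    | zero => intro z; simp
    | succ m ih =>
      intro z
      have h1 : ((LieAlgebra.ad K g (φ lam x)) ^ (m + 1)) (φ lam z) =
          (LieAlgebra.ad K g (φ lam x)) (((LieAlgebra.ad K g (φ lam x)) ^ m) (φ lam z)) := by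
        rw [pow_succ']; rfl
      have h2 : ((LieAlgebra.ad K g x) ^ (m + 1)) z =
          ⁅x, ((LieAlgebra.ad K g x) ^ m) z⁆ := by
        rw [pow_succ']; rfl
      rw [h1, ih z, LieAlgebra.ad_apply, lie_smul, key lam x _, smul_smul, h2,
        pow_succ, mul_comm]
  -- surjectivity of φ lam
  have hsurj : ∀ y : g, ∃ z : g, φ lam z = y := by
    intro y
    exact ⟨φ lam⁻¹ y, by rw [hcomp, mul_inv_cancel₀ hlam, hone]⟩
  refine ⟨n, ?_⟩
  ext y
  obtain ⟨z, rfl⟩ := hsurj y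
  rw [LinearMap.zero_apply, hiter n z, hn]
  simp
end

section
/- Let K be a field of characteristic zero, V a K-vector space, and ω : V × V → K a K-bilinear form. Suppose that for every nonzero λ ∈ K there is a K-linear map g_λ : V → V such that ω(g_λ(v), g_λ(w)) = λ·ω(v, w) for all v, w ∈ V. Let p, q be natural numbers with p + q ≠ 1, and suppose v, w ∈ V satisfy g_λ(v) = λᵖ·v and g_λ(w) = λ^q·w for every nonzero λ ∈ K. Then ω(v, w) = 0. -/
/-- Weight-vanishing: if a bilinear form `ω` is rescaled by the factor `λ` under a
family of linear maps `g_λ`, then weight vectors of weights `p` and `q` with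
`p + q ≠ 1` pair to zero. -/
theorem stmt_5 (K : Type*) [Field K] [CharZero K]
    (V : Type*) [AddCommGroup V] [Module K V]
    (ω : V →ₗ[K] V →ₗ[K] K)
    (g : K → V →ₗ[K] V)
    (hg : ∀ lam : K, lam ≠ 0 → ∀ v w : V, ω (g lam v) (g lam w) = lam * ω v w)
    (p q : ℕ) (hpq : p + q ≠ 1)
    (v w : V)
    (hv : ∀ lam : K, lam ≠ 0 → g lam v = lam ^ p • v)
    (hw : ∀ lam : K, lam ≠ 0 → g lam w = lam ^ q • w) :
    ω v w = 0 := by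
  have h := hg 2 two_ne_zero v w
  rw [hv 2 two_ne_zero, hw 2 two_ne_zero, map_smul, map_smul, LinearMap.smul_apply,
    smul_eq_mul, smul_eq_mul] at h
  have key : ((2:K) ^ (p + q) - 2) * ω v w = 0 := by
    rw [pow_add]; linear_combination h
  rcases mul_eq_zero.mp key with h0 | h0
  · exfalso
    apply hpq
    have h1 : (2:K) ^ (p + q) = 2 ^ 1 := by rw [pow_one]; linear_combination h0
    have h2 : ((2 ^ (p + q) : ℕ) : K) = ((2 ^ 1 : ℕ) : K) := by push_cast; linear_combination h1
    exact Nat.pow_right_injective le_rfl (Nat.cast_inj.mp h2)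
  · exact h0
end

section
/- Let K be a field, V a finite-dimensional K-vector space, and ω a nondegenerate K-bilinear form on V. Suppose V decomposes as an internal direct sum V = ⊕_{p ∈ ℤ} V_p of subspaces (all but finitely many zero) such that ω(V_p, V_q) = 0 whenever p + q ≠ 1. If dim V_0 = (1/2)·dim V, then dim V_1 = dim V_0 and V_p = 0 for every p ∉ {0, 1}. -/
open Module

lemma dim_le_aux (K : Type*) [Field K]
    (V : Type*) [AddCommGroup V] [Module K V] [FiniteDimensional K V]
    (Vp : ℤ → Submodule K V)
    (hint : DirectSum.IsInternal Vp)
    (ω : V →ₗ[K] V →ₗ[K] K)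
    (hnd₁ : ∀ v : V, (∀ w : V, ω v w = 0) → v = 0)
    (horth : ∀ p q : ℤ, p + q ≠ 1 → ∀ v ∈ Vp p, ∀ w ∈ Vp q, ω v w = 0)
    (p : ℤ) : finrank K (Vp p) ≤ finrank K (Vp (1 - p)) := by
  let f : Vp p →ₗ[K] Module.Dual K (Vp (1 - p)) :=
    { toFun := fun v => (ω v.1).comp (Vp (1 - p)).subtype
      map_add' := by intros; ext; simp
      map_smul' := by intros; ext; simp }
  have hinj : Function.Injective f := by
    rw [← LinearMap.ker_eq_bot, LinearMap.ker_eq_bot']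
    rintro ⟨v, hv⟩ hfv
    have hall : ∀ w : V, ω v w = 0 := by
      intro w
      have hw : w ∈ ⨆ q, Vp q := hint.submodule_iSup_eq_top ▸ Submodule.mem_top
      refine Submodule.iSup_induction Vp hw (motive := fun w => ω v w = 0) ?_ (by simp) ?_
      · intro q w hwq
        rcases eq_or_ne (p + q) 1 with h | h
        · have : q = 1 - p := by omega
          subst this
          simpa [f] using DFunLike.congr_fun hfv (⟨w, hwq⟩ : Vp (1 - p))
        · exact horth p q h v hv w hwq
      · intro x y hx hy; rw [map_add, hx, hy, add_zero]
    exact Subtype.ext (hnd₁ v hall)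
  calc finrank K (Vp p) ≤ finrank K (Module.Dual K (Vp (1 - p))) :=
        LinearMap.finrank_le_finrank_of_injective hinj
    _ = finrank K (Vp (1 - p)) := Subspace.dual_finrank_eq

/-- Weight decomposition step in Theorem 4.3: for a nondegenerate bilinear form on a
finite-dimensional space decomposed into weight spaces pairing to zero unless the
weights add to `1`, if `dim V₀ = ½ dim V` then `dim V₁ = dim V₀` and all other weight
spaces vanish. -/
theorem stmt_6 (K : Type*) [Field K]
    (V : Type*) [AddCommGroup V] [Module K V] [FiniteDimensional K V]
    (Vp : ℤ → Submodule K V)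
    (hint : DirectSum.IsInternal Vp)
    (hfin : {p : ℤ | Vp p ≠ ⊥}.Finite)
    (ω : V →ₗ[K] V →ₗ[K] K)
    (hnd₁ : ∀ v : V, (∀ w : V, ω v w = 0) → v = 0)
    (hnd₂ : ∀ w : V, (∀ v : V, ω v w = 0) → w = 0)
    (horth : ∀ p q : ℤ, p + q ≠ 1 → ∀ v ∈ Vp p, ∀ w ∈ Vp q, ω v w = 0)
    (hdim : 2 * Module.finrank K (Vp 0) = Module.finrank K V) :
    Module.finrank K (Vp 1) = Module.finrank K (Vp 0) ∧
      ∀ p : ℤ, p ≠ 0 → p ≠ 1 → Vp p = ⊥ := by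
  have heq : ∀ p : ℤ, finrank K (Vp p) = finrank K (Vp (1 - p)) := by
    intro p
    refine le_antisymm (dim_le_aux K V Vp hint ω hnd₁ horth p) ?_
    have := dim_le_aux K V Vp hint ω hnd₁ horth (1 - p)
    have h2 : (1 : ℤ) - (1 - p) = p := by ring
    rw [h2] at this
    exact this
  have h10 : finrank K (Vp 1) = finrank K (Vp 0) := by
    have := heq 0
    norm_num at this
    exact this.symm
  refine ⟨h10, fun p hp0 hp1 => ?_⟩
  set q : ℤ := 1 - p with hq
  have hq0 : q ≠ 0 := by omega
  have hq1 : q ≠ 1 := by omega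
  have hpq : p ≠ q := by omega
  have ind := hint.submodule_iSupIndep
  have dimsup : ∀ s t : Submodule K V, Disjoint s t →
      finrank K (s ⊔ t : Submodule K V) = finrank K s + finrank K t := by
    intro s t h
    have := Submodule.finrank_sup_add_finrank_inf_eq s t
    rw [h.eq_bot] at this
    simpa using this
  have d1 : Disjoint (Vp 0) (Vp 1) := ind.pairwiseDisjoint (by norm_num)
  have d2 : Disjoint (Vp q) (Vp 0 ⊔ Vp 1) := by
    have := ind.disjoint_biSup (x := q) (y := ({0, 1} : Set ℤ))
      (by simp [hq0, hq1])
    rwa [iSup_pair] at this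
  have d3 : Disjoint (Vp p) (Vp 0 ⊔ Vp 1 ⊔ Vp q) := by
    have := ind.disjoint_biSup (x := p) (y := ({0, 1, q} : Set ℤ))
      (by simp [hp0, hp1, hpq])
    rw [show (⨆ j ∈ ({0, 1, q} : Set ℤ), Vp j) = Vp 0 ⊔ (Vp 1 ⊔ Vp q) by
      rw [iSup_insert, iSup_pair]] at this
    rwa [← sup_assoc] at this
  have hle : finrank K (Vp 0 ⊔ Vp 1 ⊔ Vp q ⊔ Vp p : Submodule K V) ≤ finrank K V :=
    Submodule.finrank_le _
  rw [dimsup _ _ d3.symm, dimsup _ _ d2.symm, dimsup _ _ d1] at hle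
  have hqp : finrank K (Vp q) = finrank K (Vp p) := by
    have := heq p; omega
  rw [← Submodule.finrank_eq_zero (S := Vp p)]
  omega
end
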